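/- For n ≥ 17, Σ_{k=1}^{n} (2^k − 1)/k ≤ 2^{n+1} / (n − 1 − 2/(n−5) + 1/n²). -/

import Mathlib

theorem key11 (x : ℝ) (hx : (17:ℝ) ≤ x) :
    1 / (x - 1 - 2 / (x - 5) + 1 / x ^ 2) + 1 / (x + 1) ≤
      2 / (x + 1 - 1 - 2 / (x + 1 - 5) + 1 / (x + 1) ^ 2) := by
  have hx0 : (0:ℝ) < x := by linarith
  have h5 : (0:ℝ) < x - 5 := by linarith
  have h4 : (0:ℝ) < x - 4 := by linarith
  have h1 : (0:ℝ) < x + 1 := by linarith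
  have ht : (0:ℝ) ≤ x - 17 := by linarith
  have hP : (0:ℝ) < (x-1)*(x-5)*x^2 - 2*x^2 + (x-5) := by
    nlinarith [sq_nonneg x, pow_nonneg ht 3, pow_nonneg ht 4]
  have hQ : (0:ℝ) < x*(x-4)*(x+1)^2 - 2*(x+1)^2 + (x-4) := by
    nlinarith [sq_nonneg x, pow_nonneg ht 3, pow_nonneg ht 4]
  have hAeq : x - 1 - 2 / (x - 5) + 1 / x ^ 2
      = ((x-1)*(x-5)*x^2 - 2*x^2 + (x-5)) / (x^2 * (x-5)) := by
    field_simp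
  have hBeq : x + 1 - 1 - 2 / (x + 1 - 5) + 1 / (x + 1) ^ 2
      = (x*(x-4)*(x+1)^2 - 2*(x+1)^2 + (x-4)) / ((x-4) * (x+1)^2) := by
    have h4' : x - 4 ≠ 0 := h4.ne'
    have : x + 1 - 5 = x - 4 := by ring
    rw [this]
    field_simp
    ring
  rw [hAeq, hBeq, one_div_div, div_div_eq_mul_div, div_add_div _ _ hP.ne' h1.ne',
    div_le_div_iff₀ (by positivity) hQ]
  nlinarith [pow_nonneg ht 2, pow_nonneg ht 3, pow_nonneg ht 4, pow_nonneg ht 5]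

theorem keyA (x : ℝ) (hx : (17:ℝ) ≤ x) :
    0 < x - 1 - 2 / (x - 5) + 1 / x ^ 2 := by
  have hx0 : (0:ℝ) < x := by linarith
  have h5 : (0:ℝ) < x - 5 := by linarith
  have h2 : 2 / (x - 5) ≤ 1 := by
    rw [div_le_one h5]; linarith
  have h3 : (0:ℝ) ≤ 1 / x ^ 2 := by positivity
  linarith

theorem stmt11 (n : ℕ) (hn : 17 ≤ n) :
    ∑ k ∈ Finset.Icc 1 n, ((2 : ℝ) ^ k - 1) / (k : ℝ) ≤
      2 ^ (n + 1) / ((n : ℝ) - 1 - 2 / ((n : ℝ) - 5) + 1 / (n : ℝ) ^ 2) := by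
  induction n, hn using Nat.le_induction with
  | base =>
    norm_num [Finset.sum_Icc_succ_top]
  | succ n hn ih =>
    have hx : (17:ℝ) ≤ (n:ℝ) := by exact_mod_cast hn
    have hA := keyA (n:ℝ) hx
    have hx1 : (0:ℝ) < (n:ℝ) + 1 := by linarith
    have hkey := key11 (n:ℝ) hx
    have hsum : ∑ k ∈ Finset.Icc 1 (n+1), ((2 : ℝ) ^ k - 1) / (k : ℝ)
        = (∑ k ∈ Finset.Icc 1 n, ((2 : ℝ) ^ k - 1) / (k : ℝ))
          + ((2:ℝ) ^ (n+1) - 1) / ((n:ℝ) + 1) := by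
      rw [Finset.sum_Icc_succ_top (by omega)]
      push_cast
      ring_nf
    have hpow : (0:ℝ) < 2 ^ (n+1) := by positivity
    have step1 : ((2:ℝ) ^ (n+1) - 1) / ((n:ℝ) + 1) ≤ (2:ℝ) ^ (n+1) / ((n:ℝ) + 1) := by
      gcongr
      linarith
    have hgoal : ∑ k ∈ Finset.Icc 1 n, ((2 : ℝ) ^ k - 1) / (k : ℝ)
          + ((2:ℝ) ^ (n+1) - 1) / ((n:ℝ) + 1)
        ≤ 2 ^ (n+2) / ((n:ℝ) + 1 - 1 - 2 / ((n:ℝ) + 1 - 5) + 1 / ((n:ℝ) + 1) ^ 2) := by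
      calc ∑ k ∈ Finset.Icc 1 n, ((2 : ℝ) ^ k - 1) / (k : ℝ)
            + ((2:ℝ) ^ (n+1) - 1) / ((n:ℝ) + 1)
          ≤ 2 ^ (n+1) / ((n : ℝ) - 1 - 2 / ((n : ℝ) - 5) + 1 / (n : ℝ) ^ 2)
            + (2:ℝ) ^ (n+1) / ((n:ℝ) + 1) := add_le_add ih step1
        _ = 2 ^ (n+1) * (1 / ((n : ℝ) - 1 - 2 / ((n : ℝ) - 5) + 1 / (n : ℝ) ^ 2)
            + 1 / ((n:ℝ) + 1)) := by rw [mul_add, mul_one_div, mul_one_div]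
        _ ≤ 2 ^ (n+1) * (2 / ((n:ℝ) + 1 - 1 - 2 / ((n:ℝ) + 1 - 5) + 1 / ((n:ℝ) + 1) ^ 2)) :=
            mul_le_mul_of_nonneg_left hkey (le_of_lt hpow)
        _ = 2 ^ (n+2) / ((n:ℝ) + 1 - 1 - 2 / ((n:ℝ) + 1 - 5) + 1 / ((n:ℝ) + 1) ^ 2) := by
            rw [pow_succ _ (n+1)]; ring
    rw [hsum]
    convert hgoal using 3 <;> push_cast <;> ring
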